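/- Let (u,τ) be a twice continuously differentiable solution of the p-system with τ > 0 on an open subset of ℝ×ℝ. Then at every point of the domain the gradient variables satisfy the Riccati equations α_t + c·α_x = k₁·(αβ − α²) and β_t − c·β_x = k₁·(αβ − β²), where k₁ = ((γ+1)K_c/(2(γ−1)))·η^{2/(γ−1)} with K_c = √(Kγ)·K_τ^{−(γ+1)/2} and K_τ = (2√(Kγ)/(γ−1))^{2/(γ−1)}. -/

import Mathlib

open Real Set MeasureTheory

noncomputable section

/-- Partial derivative in the spatial variable `x`. -/
def pdx (f : ℝ → ℝ → ℝ) (x t : ℝ) : ℝ := deriv (fun y => f y t) x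

/-- Partial derivative in the time variable `t`. -/
def pdt (f : ℝ → ℝ → ℝ) (x t : ℝ) : ℝ := deriv (fun s => f x s) t

/-- The time strip `ℝ × [0, T)`, where `T` is a real number or `+∞`. -/
def strip (T : EReal) : Set (ℝ × ℝ) := {p : ℝ × ℝ | 0 ≤ p.2 ∧ (p.2 : EReal) < T}

/-- `η = (2√(Kγ)/(γ−1)) τ^{−(γ−1)/2}`. -/
def etaP (K γ : ℝ) (τ : ℝ → ℝ → ℝ) (x t : ℝ) : ℝ :=
  2 * Real.sqrt (K * γ) / (γ - 1) * τ x t ^ (-(γ - 1) / 2)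

/-- Gradient variable `α = s_x = u_x + η_x` for the p-system. -/
def alphaP (K γ : ℝ) (u τ : ℝ → ℝ → ℝ) (x t : ℝ) : ℝ :=
  pdx u x t + pdx (etaP K γ τ) x t

/-- Gradient variable `β = r_x = u_x − η_x` for the p-system. -/
def betaP (K γ : ℝ) (u τ : ℝ → ℝ → ℝ) (x t : ℝ) : ℝ :=
  pdx u x t - pdx (etaP K γ τ) x t

/-- The p-system `τ_t − u_x = 0`, `u_t + p_x = 0` with `p = K τ^{−γ}`, at the point `(x,t)`. -/
def pSystem (K γ : ℝ) (u τ : ℝ → ℝ → ℝ) (x t : ℝ) : Prop :=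
  pdt τ x t - pdx u x t = 0 ∧
  pdt u x t + pdx (fun y s => K * τ y s ^ (-γ)) x t = 0

/-- Riemann invariant `s = u + η`. -/
def sRi (K γ : ℝ) (u τ : ℝ → ℝ → ℝ) (x t : ℝ) : ℝ := u x t + etaP K γ τ x t

/-- Riemann invariant `r = u − η`. -/
def rRi (K γ : ℝ) (u τ : ℝ → ℝ → ℝ) (x t : ℝ) : ℝ := u x t - etaP K γ τ x t

/-- The Lagrangian wave speed `c = √(Kγ) τ^{−(γ+1)/2}`. -/
def cP (K γ : ℝ) (τ : ℝ → ℝ → ℝ) (x t : ℝ) : ℝ :=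
  Real.sqrt (K * γ) * τ x t ^ (-(γ + 1) / 2)

/-- The constant `K_τ = (2√(Kγ)/(γ−1))^{2/(γ−1)}`. -/
def KtauC (K γ : ℝ) : ℝ := (2 * Real.sqrt (K * γ) / (γ - 1)) ^ (2 / (γ - 1))

/-- The constant `K_c = √(Kγ) K_τ^{−(γ+1)/2}`. -/
def KcC (K γ : ℝ) : ℝ := Real.sqrt (K * γ) * KtauC K γ ^ (-(γ + 1) / 2)

/-- `k₁ = ((γ+1)K_c/(2(γ−1))) η^{2/(γ−1)}`. -/
def k1P (K γ : ℝ) (τ : ℝ → ℝ → ℝ) (x t : ℝ) : ℝ :=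
  (γ + 1) * KcC K γ / (2 * (γ - 1)) * etaP K γ τ x t ^ (2 / (γ - 1))
private lemma slice_x {F : ℝ × ℝ → ℝ} {L : ℝ × ℝ →L[ℝ] ℝ} {x t : ℝ}
    (hF : HasFDerivAt F L (x, t)) :
    HasDerivAt (fun y => F (y, t)) (L (1, 0)) x := by
  have h1 : HasDerivAt (fun y : ℝ => ((y : ℝ), t)) ((1 : ℝ), (0 : ℝ)) x :=
    (hasDerivAt_id x).prodMk (hasDerivAt_const x t)
  exact hF.comp_hasDerivAt x h1

private lemma slice_t {F : ℝ × ℝ → ℝ} {L : ℝ × ℝ →L[ℝ] ℝ} {x t : ℝ}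
    (hF : HasFDerivAt F L (x, t)) :
    HasDerivAt (fun s => F (x, s)) (L (0, 1)) t := by
  have h1 : HasDerivAt (fun s : ℝ => ((x : ℝ), s)) ((0 : ℝ), (1 : ℝ)) t :=
    (hasDerivAt_const t x).prodMk (hasDerivAt_id t)
  exact hF.comp_hasDerivAt t h1


private lemma k1P_closed (K γ : ℝ) (hK : 0 < K) (hγ : 1 < γ) (τ : ℝ → ℝ → ℝ) (x t : ℝ)
    (hpos : 0 < τ x t) : k1P K γ τ x t = (γ + 1) / (4 * τ x t) := by
  have hKγ : 0 < K * γ := mul_pos hK (lt_trans one_pos hγ)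
  have ha : 0 < Real.sqrt (K * γ) := Real.sqrt_pos.2 hKγ
  have hγ1 : (0:ℝ) < γ - 1 := by linarith
  have hA : 0 < 2 * Real.sqrt (K * γ) / (γ - 1) := by positivity
  unfold k1P KcC KtauC etaP
  rw [Real.mul_rpow hA.le (Real.rpow_nonneg hpos.le _)]
  rw [← Real.rpow_mul hpos.le, ← Real.rpow_mul hA.le]
  have he1 : -(γ - 1) / 2 * (2 / (γ - 1)) = -1 := by field_simp
  have he2 : 2 / (γ - 1) * (-(γ + 1) / 2) = -(γ + 1) / (γ - 1) := by field_simp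
  rw [he1, he2, Real.rpow_neg_one]
  have he3 : (2 * Real.sqrt (K * γ) / (γ - 1)) ^ (-(γ + 1) / (γ - 1)) *
      (2 * Real.sqrt (K * γ) / (γ - 1)) ^ (2 / (γ - 1)) =
      (2 * Real.sqrt (K * γ) / (γ - 1)) ^ (-(1:ℝ)) := by
    rw [← Real.rpow_add hA]
    congr 1
    field_simp
    ring
  have hgoal : (γ + 1) * (Real.sqrt (K * γ) * (2 * Real.sqrt (K * γ) / (γ - 1)) ^ (-(γ + 1) / (γ - 1))) /
      (2 * (γ - 1)) * ((2 * Real.sqrt (K * γ) / (γ - 1)) ^ (2 / (γ - 1)) * (τ x t)⁻¹) =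
      (γ + 1) / (4 * τ x t) := by
    rw [mul_comm ((2 * Real.sqrt (K * γ) / (γ - 1)) ^ (2 / (γ - 1))) ((τ x t)⁻¹), ← mul_assoc]
    have : (γ + 1) * (Real.sqrt (K * γ) * (2 * Real.sqrt (K * γ) / (γ - 1)) ^ (-(γ + 1) / (γ - 1))) /
        (2 * (γ - 1)) * (τ x t)⁻¹ * ((2 * Real.sqrt (K * γ) / (γ - 1)) ^ (2 / (γ - 1))) =
        (γ + 1) * Real.sqrt (K * γ) / (2 * (γ - 1)) * (τ x t)⁻¹ *
          ((2 * Real.sqrt (K * γ) / (γ - 1)) ^ (-(γ + 1) / (γ - 1)) *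
           (2 * Real.sqrt (K * γ) / (γ - 1)) ^ (2 / (γ - 1))) := by ring
    rw [this, he3, Real.rpow_neg_one]
    field_simp
    ring
  exact hgoal

private lemma riccati_master
    (K γ : ℝ) (hK : 0 < K) (hγ : 1 < γ)
    (Ω : Set (ℝ × ℝ)) (hΩ : IsOpen Ω)
    (u τ : ℝ → ℝ → ℝ)
    (hu_reg : ContDiffOn ℝ 2 (fun p : ℝ × ℝ => u p.1 p.2) Ω)
    (hτ_reg : ContDiffOn ℝ 2 (fun p : ℝ × ℝ => τ p.1 p.2) Ω)
    (hτ_pos : ∀ p ∈ Ω, 0 < τ p.1 p.2)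
    (hpde : ∀ p ∈ Ω, pSystem K γ u τ p.1 p.2)
    (ε : ℝ) (hε : ε * ε = 1)
    (W : ℝ → ℝ → ℝ) (hW : ∀ y s, W y s = pdx u y s + ε * pdx (etaP K γ τ) y s)
    (p : ℝ × ℝ) (hp : p ∈ Ω) :
    pdt W p.1 p.2 + ε * cP K γ τ p.1 p.2 * pdx W p.1 p.2 =
      -(ε * (2 * k1P K γ τ p.1 p.2 * pdx (etaP K γ τ) p.1 p.2)) * W p.1 p.2 := by
  obtain ⟨x, t⟩ := p
  dsimp only at hp ⊢
  have hKγ : 0 < K * γ := mul_pos hK (lt_trans one_pos hγ)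
  have ha : 0 < Real.sqrt (K * γ) := Real.sqrt_pos.2 hKγ
  have hγ1 : (0:ℝ) < γ - 1 := by linarith
  set T : ℝ × ℝ → ℝ := fun q => τ q.1 q.2 with hT_def
  set U : ℝ × ℝ → ℝ := fun q => u q.1 q.2 with hU_def
  set C : ℝ × ℝ → ℝ := fun q => Real.sqrt (K * γ) * T q ^ (-(γ + 1) / 2) with hC_def
  set S : ℝ × ℝ → ℝ :=
    fun q => U q + ε * (2 * Real.sqrt (K * γ) / (γ - 1) * T q ^ (-(γ - 1) / 2)) with hS_def
  -- differentiability of T and U at points of Ω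
  have hTd : ∀ q ∈ Ω, HasFDerivAt T (fderiv ℝ T q) q := fun q hq =>
    (((hτ_reg.contDiffAt (hΩ.mem_nhds hq)).differentiableAt (by norm_num)).hasFDerivAt)
  have hUd : ∀ q ∈ Ω, HasFDerivAt U (fderiv ℝ U q) q := fun q hq =>
    (((hu_reg.contDiffAt (hΩ.mem_nhds hq)).differentiableAt (by norm_num)).hasFDerivAt)
  -- derivative of the eta part
  have hEta : ∀ q ∈ Ω, HasFDerivAt
      (fun q' => 2 * Real.sqrt (K * γ) / (γ - 1) * T q' ^ (-(γ - 1) / 2))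
      ((-(C q)) • fderiv ℝ T q) q := by
    intro q hq
    have hpos : 0 < T q := hτ_pos q hq
    have h1 : HasDerivAt (fun z : ℝ => z ^ (-(γ - 1) / 2))
        ((-(γ - 1) / 2) * T q ^ (-(γ - 1) / 2 - 1)) (T q) :=
      Real.hasDerivAt_rpow_const (Or.inl (ne_of_gt hpos))
    have h2 : HasFDerivAt (fun q' => T q' ^ (-(γ - 1) / 2))
        (((-(γ - 1) / 2) * T q ^ (-(γ - 1) / 2 - 1)) • fderiv ℝ T q) q :=
      h1.comp_hasFDerivAt q (hTd q hq)
    have h3 := h2.const_mul (2 * Real.sqrt (K * γ) / (γ - 1))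
    have hcoef : (2 * Real.sqrt (K * γ) / (γ - 1)) • (((-(γ - 1) / 2) * T q ^ (-(γ - 1) / 2 - 1)) • fderiv ℝ T q)
        = (-(C q)) • fderiv ℝ T q := by
      rw [smul_smul]
      congr 1
      have he : -(γ - 1) / 2 - 1 = -(γ + 1) / 2 := by ring
      rw [he, hC_def]
      field_simp
    rw [hcoef] at h3
    exact h3
  -- derivative of S
  have hSd : ∀ q ∈ Ω, HasFDerivAt S (fderiv ℝ U q - (ε * C q) • fderiv ℝ T q) q := by
    intro q hq
    have h3 := ((hEta q hq).const_mul ε)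
    have : ε • ((-(C q)) • fderiv ℝ T q) = -((ε * C q) • fderiv ℝ T q) := by
      rw [smul_smul]; rw [mul_neg]; exact neg_smul (ε * C q) (fderiv ℝ T q)
    rw [this] at h3
    have h4 := (hUd q hq).add h3
    rw [hS_def, sub_eq_add_neg]
    exact h4
  have hfS : ∀ q ∈ Ω, fderiv ℝ S q = fderiv ℝ U q - (ε * C q) • fderiv ℝ T q :=
    fun q hq => (hSd q hq).fderiv
  -- pointwise translations of pdx/pdt into fderiv values
  have hux : ∀ q ∈ Ω, pdx u q.1 q.2 = fderiv ℝ U q (1, 0) := by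
    intro q hq
    obtain ⟨y, s⟩ := q
    exact (slice_x (hUd (y, s) hq)).deriv
  have hut : ∀ q ∈ Ω, pdt u q.1 q.2 = fderiv ℝ U q (0, 1) := by
    intro q hq
    obtain ⟨y, s⟩ := q
    exact (slice_t (hUd (y, s) hq)).deriv
  have hτx : ∀ q ∈ Ω, pdx τ q.1 q.2 = fderiv ℝ T q (1, 0) := by
    intro q hq
    obtain ⟨y, s⟩ := q
    exact (slice_x (hTd (y, s) hq)).deriv
  have hτt : ∀ q ∈ Ω, pdt τ q.1 q.2 = fderiv ℝ T q (0, 1) := by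
    intro q hq
    obtain ⟨y, s⟩ := q
    exact (slice_t (hTd (y, s) hq)).deriv
  have hηx : ∀ q ∈ Ω, pdx (etaP K γ τ) q.1 q.2 = -(C q) * fderiv ℝ T q (1, 0) := by
    intro q hq
    obtain ⟨y, s⟩ := q
    have h := slice_x (hEta (y, s) hq)
    have h2 : HasDerivAt (fun y' => etaP K γ τ y' s) (((-(C (y, s))) • fderiv ℝ T (y, s)) (1, 0)) y := h
    simpa [pdx] using h2.deriv
  -- PDE consequences
  have hpde1 : ∀ q ∈ Ω, fderiv ℝ T q (0, 1) = fderiv ℝ U q (1, 0) := by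
    intro q hq
    have h := (hpde q hq).1
    rw [hτt q hq, hux q hq] at h
    linarith
  have hpde2 : ∀ q ∈ Ω, fderiv ℝ U q (0, 1) =
      K * γ * T q ^ (-γ - 1) * fderiv ℝ T q (1, 0) := by
    intro q hq
    obtain ⟨y, s⟩ := q
    have hpos : 0 < T (y, s) := hτ_pos (y, s) hq
    have hpr : HasDerivAt (fun y' => K * τ y' s ^ (-γ))
        (K * (fderiv ℝ T (y, s) (1, 0) * (-γ) * T (y, s) ^ (-γ - 1))) y := by
      have h1 : HasDerivAt (fun y' => τ y' s ^ (-γ))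
          (fderiv ℝ T (y, s) (1, 0) * (-γ) * T (y, s) ^ (-γ - 1)) y := by
        have := (slice_x (hTd (y, s) hq)).rpow_const (p := -γ) (Or.inl (ne_of_gt hpos))
        convert this using 1
      exact h1.const_mul K
    have h2 := (hpde (y, s) hq).2
    have h3 : pdx (fun y' s' => K * τ y' s' ^ (-γ)) y s =
        K * (fderiv ℝ T (y, s) (1, 0) * (-γ) * T (y, s) ^ (-γ - 1)) := hpr.deriv
    rw [h3, hut (y, s) hq] at h2
    linarith
  -- the Riemann invariant identity on Ω
  have hinv : ∀ q ∈ Ω, fderiv ℝ S q (0, 1) + ε * (C q * fderiv ℝ S q (1, 0)) = 0 := by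
    intro q hq
    have hpos : 0 < T q := hτ_pos q hq
    have hC2 : C q * C q = K * γ * T q ^ (-γ - 1) := by
      rw [hC_def]
      have : Real.sqrt (K * γ) * T q ^ (-(γ + 1) / 2) * (Real.sqrt (K * γ) * T q ^ (-(γ + 1) / 2))
          = Real.sqrt (K * γ) * Real.sqrt (K * γ) * (T q ^ (-(γ + 1) / 2) * T q ^ (-(γ + 1) / 2)) := by
        ring
      rw [this, ← Real.rpow_add hpos, Real.mul_self_sqrt hKγ.le]
      congr 1
      ring
    rw [hfS q hq]
    simp only [ContinuousLinearMap.sub_apply, ContinuousLinearMap.smul_apply, smul_eq_mul]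
    rw [hpde1 q hq, hpde2 q hq]
    linear_combination (-(fderiv ℝ T q (1, 0))) * hC2 +
      (-(C q * C q * fderiv ℝ T q (1, 0))) * hε

  -- now work at the point p = (x, t)
  have hppos : 0 < T (x, t) := hτ_pos (x, t) hp
  have hS2 : ContDiffAt ℝ 2 S (x, t) := by
    have hU2 : ContDiffAt ℝ 2 U (x, t) := hu_reg.contDiffAt (hΩ.mem_nhds hp)
    have hT2 : ContDiffAt ℝ 2 T (x, t) := hτ_reg.contDiffAt (hΩ.mem_nhds hp)
    have hr : ContDiffAt ℝ 2 (fun q => T q ^ (-(γ - 1) / 2)) (x, t) :=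
      hT2.rpow_const_of_ne (ne_of_gt hppos)
    have h2 : ContDiffAt ℝ 2
        (fun q => ε * (2 * Real.sqrt (K * γ) / (γ - 1) * T q ^ (-(γ - 1) / 2))) (x, t) :=
      contDiffAt_const.mul (contDiffAt_const.mul hr)
    rw [hS_def]
    exact hU2.add h2
  have hH1 : ContDiffAt ℝ 1 (fderiv ℝ S) (x, t) := hS2.fderiv_right (by norm_num)
  have hHd : HasFDerivAt (fderiv ℝ S) (fderiv ℝ (fderiv ℝ S) (x, t)) (x, t) :=
    (hH1.differentiableAt (by norm_num)).hasFDerivAt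
  set B := fderiv ℝ (fderiv ℝ S) (x, t) with hB_def
  have hsymm : ∀ v w : ℝ × ℝ, B v w = B w v := by
    intro v w
    refine second_derivative_symmetric_of_eventually (f := S) ?_ hHd v w
    filter_upwards [hΩ.mem_nhds hp] with q hq
    exact ((hSd q hq).differentiableAt).hasFDerivAt
  have hHv : ∀ v : ℝ × ℝ, HasFDerivAt (fun q => fderiv ℝ S q v)
      ((ContinuousLinearMap.apply ℝ ℝ v).comp B) (x, t) :=
    fun v => (ContinuousLinearMap.apply ℝ ℝ v).hasFDerivAt.comp (x, t) hHd
  have hWeq : ∀ q ∈ Ω, W q.1 q.2 = fderiv ℝ S q (1, 0) := by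
    intro q hq
    rw [hW q.1 q.2, hfS q hq]
    simp only [ContinuousLinearMap.sub_apply, ContinuousLinearMap.smul_apply, smul_eq_mul]
    rw [hux q hq, hηx q hq]
    ring
  have hmemt : {s : ℝ | ((x : ℝ), s) ∈ Ω} ∈ nhds t := by
    have hc : Continuous (fun s : ℝ => ((x : ℝ), s)) := by fun_prop
    exact (hΩ.preimage hc).mem_nhds hp
  have hmemx : {y : ℝ | (y, (t : ℝ)) ∈ Ω} ∈ nhds x := by
    have hc : Continuous (fun y : ℝ => (y, (t : ℝ))) := by fun_prop
    exact (hΩ.preimage hc).mem_nhds hp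
  have hWt : pdt W x t = B (0, 1) (1, 0) := by
    have heq : (fun s => W x s) =ᶠ[nhds t] (fun s => fderiv ℝ S (x, s) (1, 0)) := by
      filter_upwards [hmemt] with s hs
      exact hWeq (x, s) hs
    have hd := slice_t (hHv (1, 0))
    unfold pdt
    rw [heq.deriv_eq, hd.deriv]
    simp
  have hWx : pdx W x t = B (1, 0) (1, 0) := by
    have heq : (fun y => W y t) =ᶠ[nhds x] (fun y => fderiv ℝ S (y, t) (1, 0)) := by
      filter_upwards [hmemx] with y hy
      exact hWeq (y, t) hy
    have hd := slice_x (hHv (1, 0))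
    unfold pdx
    rw [heq.deriv_eq, hd.deriv]
    simp
  have hCx : HasDerivAt (fun y => C (y, t))
      (Real.sqrt (K * γ) * (fderiv ℝ T (x, t) (1, 0) * (-(γ + 1) / 2) *
        T (x, t) ^ (-(γ + 1) / 2 - 1))) x := by
    have h1 := (slice_x (hTd (x, t) hp)).rpow_const (p := -(γ + 1) / 2)
      (Or.inl (ne_of_gt hppos))
    have h2 := h1.const_mul (Real.sqrt (K * γ))
    rw [hC_def]
    exact h2
  have hGslice : HasDerivAt
      (fun y => fderiv ℝ S (y, t) (0, 1) + ε * (C (y, t) * fderiv ℝ S (y, t) (1, 0)))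
      (B (1, 0) (0, 1) + ε * ((Real.sqrt (K * γ) * (fderiv ℝ T (x, t) (1, 0) * (-(γ + 1) / 2) *
        T (x, t) ^ (-(γ + 1) / 2 - 1))) * fderiv ℝ S (x, t) (1, 0) +
        C (x, t) * B (1, 0) (1, 0))) x := by
    have h1 := slice_x (hHv (0, 1))
    have h2 := slice_x (hHv (1, 0))
    have h3 := (hCx.mul h2).const_mul ε
    have h4 := h1.add h3
    convert h4 using 1 <;> rfl
  have hGx : B (1, 0) (0, 1) + ε * ((Real.sqrt (K * γ) * (fderiv ℝ T (x, t) (1, 0) * (-(γ + 1) / 2) *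
      T (x, t) ^ (-(γ + 1) / 2 - 1))) * fderiv ℝ S (x, t) (1, 0) +
      C (x, t) * B (1, 0) (1, 0)) = 0 := by
    have hzero : (fun y => fderiv ℝ S (y, t) (0, 1) + ε * (C (y, t) * fderiv ℝ S (y, t) (1, 0)))
        =ᶠ[nhds x] (fun _ => (0 : ℝ)) := by
      filter_upwards [hmemx] with y hy
      exact hinv (y, t) hy
    rw [← hGslice.deriv, hzero.deriv_eq, deriv_const]
  -- final algebra
  have hk1 : k1P K γ τ x t = (γ + 1) / (4 * τ x t) := k1P_closed K γ hK hγ τ x t hppos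
  have hηxp := hηx (x, t) hp
  have hWp := hWeq (x, t) hp
  have hTp : T (x, t) = τ x t := rfl
  have hCp : C (x, t) = Real.sqrt (K * γ) * τ x t ^ (-(γ + 1) / 2) := by rw [hC_def]
  have hrpow : τ x t ^ (-(γ + 1) / 2 - 1) = τ x t ^ (-(γ + 1) / 2) / τ x t := by
    rw [Real.rpow_sub (hτ_pos (x, t) hp), Real.rpow_one]
  have hcP : cP K γ τ x t = C (x, t) := by rw [hCp]; rfl
  simp only at hWp
  rw [hWt, hWx, hsymm (0, 1) (1, 0), hk1, hηxp, hWp, hcP]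
  rw [hCp] at hGx ⊢
  rw [hTp, hrpow] at hGx
  linear_combination hGx

/-- Lax's Riccati equations along characteristics for the p-system. -/
theorem psystem_riccati_equations
    (K γ : ℝ) (hK : 0 < K) (hγ : 1 < γ)
    (Ω : Set (ℝ × ℝ)) (hΩ : IsOpen Ω)
    (u τ : ℝ → ℝ → ℝ)
    (hu_reg : ContDiffOn ℝ 2 (fun p : ℝ × ℝ => u p.1 p.2) Ω)
    (hτ_reg : ContDiffOn ℝ 2 (fun p : ℝ × ℝ => τ p.1 p.2) Ω)
    (hτ_pos : ∀ p ∈ Ω, 0 < τ p.1 p.2)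
    (hpde : ∀ p ∈ Ω, pSystem K γ u τ p.1 p.2) :
    ∀ p ∈ Ω,
      pdt (alphaP K γ u τ) p.1 p.2 + cP K γ τ p.1 p.2 * pdx (alphaP K γ u τ) p.1 p.2 =
        k1P K γ τ p.1 p.2 *
          (alphaP K γ u τ p.1 p.2 * betaP K γ u τ p.1 p.2 - (alphaP K γ u τ p.1 p.2) ^ 2) ∧
      pdt (betaP K γ u τ) p.1 p.2 - cP K γ τ p.1 p.2 * pdx (betaP K γ u τ) p.1 p.2 =
        k1P K γ τ p.1 p.2 *
          (alphaP K γ u τ p.1 p.2 * betaP K γ u τ p.1 p.2 - (betaP K γ u τ p.1 p.2) ^ 2) := by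
  intro p hp
  have hA := riccati_master K γ hK hγ Ω hΩ u τ hu_reg hτ_reg hτ_pos hpde 1 (by norm_num)
    (alphaP K γ u τ) (fun y s => by simp [alphaP]) p hp
  have hB := riccati_master K γ hK hγ Ω hΩ u τ hu_reg hτ_reg hτ_pos hpde (-1) (by norm_num)
    (betaP K γ u τ) (fun y s => by simp only [betaP]; ring) p hp
  have h2η : alphaP K γ u τ p.1 p.2 - betaP K γ u τ p.1 p.2 =
      2 * pdx (etaP K γ τ) p.1 p.2 := by
    simp only [alphaP, betaP]; ring
  constructor
  · linear_combination hA +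
      k1P K γ τ p.1 p.2 * alphaP K γ u τ p.1 p.2 * h2η
  · linear_combination hB -
      k1P K γ τ p.1 p.2 * betaP K γ u τ p.1 p.2 * h2η
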